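/- For m ≥ 2 and n with base m representation (α_j,...,α_0), the number c_m(n) of m-ary partitions of n without gaps satisfies c_m(n) = 1 + Σ_{r=1}^{j} Σ_{k_r=χ_r}^{⌊n/m^r⌋−1} Σ_{k_{r-1}=χ_{r-1}}^{α_{r-1}−1+m·k_r} ... Σ_{k_1=χ_1}^{α_1−1+m·k_2} 1, where χ_i = 0 if α_{i-1} > 0 and χ_i = 1 if α_{i-1} = 0. -/

import Mathlib

noncomputable def cm (m n : ℕ) : ℕ :=
  Nat.card {f : ℕ →₀ ℕ // (∑ i ∈ f.support, f i * m ^ i = n) ∧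
    ∀ i k, f i ≠ 0 → k ≤ i → f k ≠ 0}

def chi (α : ℕ → ℕ) (i : ℕ) : ℕ := if α (i - 1) = 0 then 1 else 0

noncomputable def gsum (m : ℕ) (α : ℕ → ℕ) : ℕ → ℤ → ℕ
  | 0, _ => 1
  | t + 1, u => ∑ k ∈ Finset.Icc (chi α (t + 1) : ℤ) u, gsum m α t ((α t : ℤ) - 1 + m * k)


def Pt (m t X : ℕ) := {b : Fin (t+1) → ℕ // (∀ i, b i ≠ 0) ∧ ∑ i, b i * m ^ (i : ℕ) = X}

lemma Pt_term_le (m t X : ℕ) (b : Pt m t X) (i : Fin (t+1)) : b.1 i * m ^ (i:ℕ) ≤ X := by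
  obtain ⟨b, hb1, hb2⟩ := b
  show b i * m ^ (i:ℕ) ≤ X
  rw [← hb2]
  exact Finset.single_le_sum (f := fun i : Fin (t+1) => b i * m ^ (i:ℕ))
    (fun _ _ => Nat.zero_le _) (Finset.mem_univ i)

lemma finite_Pt (m t X : ℕ) (hm : 1 ≤ m) : Finite (Pt m t X) := by
  have h : ∀ b : Pt m t X, ∀ i, b.1 i ≤ X := by
    intro b i
    have h1 := Pt_term_le m t X b i
    have h2 : 1 ≤ m ^ (i:ℕ) := Nat.one_le_pow _ _ hm
    nlinarith [Nat.zero_le (b.1 i)]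
  have hinj : Function.Injective (fun b : Pt m t X => fun i => (⟨b.1 i, Nat.lt_succ_of_le (h b i)⟩ : Fin (X+1))) := by
    intro b b' hb
    apply Subtype.ext
    funext i
    have := congrFun hb i
    simpa [Fin.ext_iff] using this
  exact Finite.of_injective _ hinj

lemma Pt_card_zero (m X : ℕ) (hX : 1 ≤ X) : Nat.card (Pt m 0 X) = 1 := by
  have : Unique (Pt m 0 X) :=
  { default := ⟨fun _ => X, fun _ => Nat.one_le_iff_ne_zero.mp hX, by simp⟩
    uniq := by
      rintro ⟨b, hb1, hb2⟩
      apply Subtype.ext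
      funext i
      have h0 : i = 0 := Fin.eq_zero i
      subst h0
      simpa using hb2 }
  exact Nat.card_unique

lemma Pt_card_of_lt (m t X : ℕ) (h : X < m ^ t) : Nat.card (Pt m t X) = 0 := by
  have : IsEmpty (Pt m t X) := by
    constructor
    intro b
    have h1 := Pt_term_le m t X b (Fin.last t)
    have h2 : 1 ≤ b.1 (Fin.last t) := Nat.pos_of_ne_zero (b.2.1 _)
    simp only [Fin.val_last] at h1
    nlinarith
  simp [Nat.card_eq_zero, this]

noncomputable def Pt_equiv_sigma (m t X : ℕ) (hm : 1 ≤ m) :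
    (Σ c : ↥(Finset.Icc 1 (X / m^(t+1))), Pt m t (X - (c:ℕ) * m^(t+1))) ≃ Pt m (t+1) X := by
  have hpow : 0 < m ^ (t+1) := Nat.pow_pos hm
  refine Equiv.ofBijective (fun x => ⟨Fin.snoc x.2.1 (x.1 : ℕ), ?_, ?_⟩) ⟨?_, ?_⟩
  · intro i
    refine Fin.lastCases ?_ ?_ i
    · simp only [Fin.snoc_last]
      have := (Finset.mem_Icc.mp x.1.2).1
      omega
    · intro i; simp only [Fin.snoc_castSucc]; exact x.2.2.1 i
  · have hcX : (x.1 : ℕ) * m^(t+1) ≤ X :=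
      (Nat.le_div_iff_mul_le hpow).mp (Finset.mem_Icc.mp x.1.2).2
    have hs := x.2.2.2
    rw [Fin.sum_univ_castSucc]
    simp only [Fin.snoc_castSucc, Fin.snoc_last, Fin.coe_castSucc, Fin.val_last]
    omega
  · rintro ⟨⟨c, hc⟩, b, hb⟩ ⟨⟨c', hc'⟩, b', hb'⟩ h
    have h' := congrArg Subtype.val h
    simp only at h'
    have hcc : c = c' := by
      have := congrFun h' (Fin.last (t+1))
      simpa using this
    subst hcc
    refine Sigma.ext rfl (heq_of_eq ?_)
    apply Subtype.ext
    funext i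
    have := congrFun h' i.castSucc
    simpa using this
  · rintro ⟨b, hb1, hb2⟩
    have hmem : b (Fin.last (t+1)) ∈ Finset.Icc 1 (X / m^(t+1)) := by
      rw [Finset.mem_Icc]
      refine ⟨Nat.pos_of_ne_zero (hb1 _), ?_⟩
      rw [Nat.le_div_iff_mul_le hpow]
      simpa using Pt_term_le m (t+1) X ⟨b, hb1, hb2⟩ (Fin.last (t+1))
    have hsum : ∑ i : Fin (t+1), b i.castSucc * m ^ (i:ℕ) = X - b (Fin.last (t+1)) * m^(t+1) := by
      rw [Fin.sum_univ_castSucc] at hb2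
      simp only [Fin.coe_castSucc, Fin.val_last] at hb2
      omega
    refine ⟨⟨⟨b (Fin.last (t+1)), hmem⟩, ⟨fun i => b i.castSucc, fun i => hb1 _, hsum⟩⟩, ?_⟩
    apply Subtype.ext
    exact Fin.snoc_init_self b

lemma Pt_card_succ (m t X : ℕ) (hm : 1 ≤ m) :
    Nat.card (Pt m (t+1) X) = ∑ c ∈ Finset.Icc 1 (X / m^(t+1)), Nat.card (Pt m t (X - c * m^(t+1))) := by
  haveI : ∀ Y, Fintype (Pt m t Y) := fun Y => @Fintype.ofFinite _ (finite_Pt m t Y hm)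
  rw [← Nat.card_congr (Pt_equiv_sigma m t X hm)]
  rw [Nat.card_eq_fintype_card, Fintype.card_sigma]
  rw [← Finset.sum_coe_sort (Finset.Icc 1 (X / m^(t+1))) (fun c => Nat.card (Pt m t (X - c * m^(t+1))))]
  congr 1
  funext c
  rw [Nat.card_eq_fintype_card]



lemma sum_digits_lt (m : ℕ) (α : ℕ → ℕ) (k : ℕ) (h : ∀ i, i < k → α i < m) :
    ∑ i ∈ Finset.range k, α i * m ^ i < m ^ k := by
  induction k with
  | zero => simp
  | succ k ih =>
    rw [Finset.sum_range_succ, pow_succ]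
    have h1 : ∑ i ∈ Finset.range k, α i * m ^ i < m ^ k := ih (fun i hi => h i (by omega))
    have h2 : α k + 1 ≤ m := h k (by omega)
    have h3 : (α k + 1) * m ^ k ≤ m * m ^ k := Nat.mul_le_mul_right _ h2
    have h4 : (α k + 1) * m ^ k = α k * m ^ k + m ^ k := by ring
    linarith

lemma div_pow_eq (m n j : ℕ) (α : ℕ → ℕ) (hm : 2 ≤ m) (hd : ∀ i, i ≤ j → α i < m)
    (hn : n = ∑ i ∈ Finset.range (j + 1), α i * m ^ i) (t : ℕ) (ht : t ≤ j) :
    n / m ^ t = ∑ i ∈ Finset.Icc t j, α i * m ^ (i - t) := by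
  have hpow : 0 < m ^ t := Nat.pow_pos (by omega)
  have hsplit : n = (∑ i ∈ Finset.range t, α i * m ^ i)
      + (∑ i ∈ Finset.Icc t j, α i * m ^ (i - t)) * m ^ t := by
    rw [hn, Finset.range_eq_Ico, ← Finset.sum_Ico_consecutive _ (Nat.zero_le t) (by omega : t ≤ j + 1)]
    have he : ∑ i ∈ Finset.Ico t (j+1), α i * m ^ i
        = (∑ i ∈ Finset.Icc t j, α i * m ^ (i - t)) * m ^ t := by
      rw [Finset.sum_mul, ← Finset.Ico_add_one_right_eq_Icc]
      refine Finset.sum_congr rfl (fun i hi => ?_)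
      rw [Finset.mem_Ico] at hi
      rw [mul_assoc, ← pow_add]
      congr 2
      omega
    rw [he, Finset.range_eq_Ico]
  have hL : ∑ i ∈ Finset.range t, α i * m ^ i < m ^ t :=
    sum_digits_lt m α t (fun i hi => hd i (by omega))
  rw [hsplit, Nat.add_mul_div_right _ _ hpow, Nat.div_eq_of_lt hL, zero_add]

lemma div_pow_succ (m n j : ℕ) (α : ℕ → ℕ) (hm : 2 ≤ m) (hd : ∀ i, i ≤ j → α i < m)
    (hn : n = ∑ i ∈ Finset.range (j + 1), α i * m ^ i) (t : ℕ) (ht : t < j) :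
    n / m ^ t = α t + m * (n / m ^ (t + 1)) := by
  rw [div_pow_eq m n j α hm hd hn t (by omega), div_pow_eq m n j α hm hd hn (t+1) (by omega)]
  have hins : Finset.Icc t j = insert t (Finset.Icc (t+1) j) := by
    ext x; simp [Finset.mem_Icc]; omega
  rw [hins, Finset.sum_insert (by simp)]
  simp only [Nat.sub_self, pow_zero, mul_one]
  congr 1
  rw [Finset.mul_sum]
  refine Finset.sum_congr rfl (fun i hi => ?_)
  rw [Finset.mem_Icc] at hi
  have : i - t = (i - (t+1)) + 1 := by omega
  rw [this, pow_succ]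
  ring

lemma digit_mod (m n j : ℕ) (α : ℕ → ℕ) (hm : 2 ≤ m) (hd : ∀ i, i ≤ j → α i < m)
    (hn : n = ∑ i ∈ Finset.range (j + 1), α i * m ^ i) (t : ℕ) (ht : t < j) :
    (n / m ^ t) % m = α t := by
  rw [div_pow_succ m n j α hm hd hn t ht]
  rw [Nat.add_mul_mod_self_left]
  exact Nat.mod_eq_of_lt (hd t (by omega))

-- general: for any Y, (Y / m^t) % m = (Y % m^(t+1)) / m^t
lemma mod_div_eq (m t Y : ℕ) : (Y % m ^ (t+1)) / m ^ t = (Y / m ^ t) % m := by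
  rw [pow_succ]
  exact Nat.mod_mul_right_div_self Y (m^t) m

lemma main_D (m n j : ℕ) (α : ℕ → ℕ) (hm : 2 ≤ m) (hd : ∀ i, i ≤ j → α i < m)
    (hn : n = ∑ i ∈ Finset.range (j + 1), α i * m ^ i) :
    ∀ t, t ≤ j → ∀ X : ℕ, X % m ^ t = n % m ^ t → 1 ≤ X →
      Nat.card (Pt m t X) = gsum m α t (((X / m ^ t : ℕ) : ℤ) - 1) := by
  intro t
  induction t with
  | zero => intro _ X _ hX; rw [Pt_card_zero m X hX]; rfl
  | succ t ih =>
    intro ht X hXmod hX1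
    have hm1 : 1 ≤ m := by omega
    have hpow : 0 < m ^ (t+1) := Nat.pow_pos hm1
    have hpt : 0 < m ^ t := Nat.pow_pos hm1
    have hR1 : X = X / m ^ (t+1) * m ^ (t+1) + X % m ^ (t+1) := by
      rw [mul_comm]; exact (Nat.div_add_mod X _).symm
    have hub : (X / m ^ (t+1)) * m ^ (t+1) ≤ X := Nat.div_mul_le_self X _
    have hdig : (X / m ^ t) % m = α t := by
      rw [← mod_div_eq, hXmod, mod_div_eq]
      exact digit_mod m n j α hm hd hn t (by omega)
    have hXt : X / m ^ t = m * (X / m ^ (t+1)) + α t := by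
      have h1 : X / m ^ t / m = X / m ^ (t+1) := by rw [Nat.div_div_eq_div_mul, ← pow_succ]
      have h2 := Nat.div_add_mod (X / m ^ t) m
      rw [h1] at h2
      omega
    have hterm : ∀ c, 1 ≤ c → c ≤ X / m ^ (t+1) → (α t ≠ 0 ∨ c < X / m ^ (t+1)) →
        Nat.card (Pt m t (X - c * m^(t+1)))
          = gsum m α t ((α t : ℤ) - 1 + m * (((X / m ^ (t+1) : ℕ) : ℤ) - c)) := by
      intro c hc1 hc2 hcase
      have hQm : c * m^(t+1) ≤ (X / m ^ (t+1)) * m^(t+1) := Nat.mul_le_mul_right _ hc2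
      have hcX : c * m^(t+1) ≤ X := le_trans hQm hub
      have hps : c * m^(t+1) = (c * m) * m^t := by rw [pow_succ]; ring
      have hXeq : X = (X - c * m^(t+1)) + (c * m) * m^t := by omega
      have hmod' : (X - c * m^(t+1)) % m ^ t = n % m ^ t := by
        have h1 : X % m ^ t = (X - c * m^(t+1)) % m ^ t := by
          conv_lhs => rw [hXeq]
          rw [Nat.add_mul_mod_self_right]
        have h2 : X % m ^ t = X % m ^ (t+1) % m ^ t :=
          (Nat.mod_mod_of_dvd X (pow_dvd_pow m (Nat.le_succ t))).symm
        have h3 : n % m ^ t = n % m ^ (t+1) % m ^ t :=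
          (Nat.mod_mod_of_dvd n (pow_dvd_pow m (Nat.le_succ t))).symm
        rw [← h1, h2, h3, hXmod]
      have hX'1 : 1 ≤ X - c * m^(t+1) := by
        rcases hcase with h | h
        · have h5 : (X % m^(t+1)) / m^t = α t := by rw [mod_div_eq]; exact hdig
          have h6 : m^t ≤ X % m^(t+1) := by
            by_contra h7
            push_neg at h7
            rw [Nat.div_eq_of_lt h7] at h5
            omega
          have h10 : c * m^(t+1) + m^t ≤ X := by
            calc c * m^(t+1) + m^t ≤ (X / m ^ (t+1)) * m^(t+1) + (X % m^(t+1)) :=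
                  Nat.add_le_add hQm h6
            _ = X := hR1.symm
          omega
        · have h8 : (c+1) * m^(t+1) ≤ (X / m ^ (t+1)) * m^(t+1) := Nat.mul_le_mul_right _ (by omega)
          have h9 : (c+1) * m^(t+1) = c * m^(t+1) + m^(t+1) := by ring
          have h10 : c * m^(t+1) + m^(t+1) ≤ X := by
            rw [← h9]; exact le_trans h8 hub
          omega
      have hdd := Nat.add_mul_div_right (X - c * m^(t+1)) (c*m) hpt
      rw [← hXeq] at hdd
      have hcm : c * m ≤ m * (X / m ^ (t+1)) + α t := by
        rw [← hXt, hdd]; exact Nat.le_add_left _ _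
      have hdiv' : (X - c * m^(t+1)) / m ^ t = m * (X / m ^ (t+1)) + α t - c * m := by
        rw [← hXt, hdd]; exact (Nat.add_sub_cancel _ _).symm
      rw [ih (by omega) _ hmod' hX'1, hdiv']
      congr 1
      push_cast [hcm]
      ring
    rw [Pt_card_succ m t X hm1]
    rw [gsum]
    by_cases hα : α t = 0
    · have hchi : ((chi α (t+1) : ℕ) : ℤ) = 1 := by simp [chi, hα]
      rw [hchi]
      rcases Nat.eq_zero_or_pos (X / m ^ (t+1)) with hQ0 | hQpos
      · rw [hQ0]
        rw [show Finset.Icc 1 0 = (∅ : Finset ℕ) from Finset.Icc_eq_empty (by omega)]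
        rw [show Finset.Icc (1:ℤ) (((0:ℕ):ℤ) - 1) = ∅ from Finset.Icc_eq_empty (by norm_num)]
        simp
      · have hQ1 : X / m ^ (t+1) = (X / m ^ (t+1) - 1) + 1 := by omega
        rw [hQ1, Finset.sum_Icc_succ_top (by omega : 1 ≤ (X / m ^ (t+1) - 1) + 1)]
        have hXr : X - ((X / m ^ (t+1) - 1) + 1) * m^(t+1) = X % m^(t+1) := by
          rw [← hQ1]
          exact Nat.sub_eq_of_eq_add (hR1.trans (add_comm _ _))
        have htop : Nat.card (Pt m t (X - ((X / m ^ (t+1) - 1) + 1) * m^(t+1))) = 0 := by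
          rw [hXr]
          apply Pt_card_of_lt
          have h5 : (X % m^(t+1)) / m^t = 0 := by rw [mod_div_eq, hdig, hα]
          exact ((Nat.div_eq_zero_iff).mp h5).resolve_left (by omega)
        rw [htop, add_zero]
        rw [← hQ1]
        refine Finset.sum_nbij' (i := fun c => ((X / m ^ (t+1) : ℕ) : ℤ) - c)
          (j := fun k => X / m ^ (t+1) - k.toNat) ?_ ?_ ?_ ?_ ?_
        · intro a ha
          simp only [Finset.mem_Icc] at ha ⊢
          omega
        · intro k hk
          simp only [Finset.mem_Icc] at hk ⊢
          omega
        · intro a ha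
          simp only [Finset.mem_Icc] at ha
          omega
        · intro k hk
          simp only [Finset.mem_Icc] at hk
          omega
        · intro c hc
          simp only [Finset.mem_Icc] at hc
          exact hterm c hc.1 (by omega) (Or.inr (by omega))
    · have hchi : ((chi α (t+1) : ℕ) : ℤ) = 0 := by simp [chi, hα]
      rw [hchi]
      refine Finset.sum_nbij' (i := fun c => ((X / m ^ (t+1) : ℕ) : ℤ) - c)
        (j := fun k => X / m ^ (t+1) - k.toNat) ?_ ?_ ?_ ?_ ?_
      · intro a ha
        simp only [Finset.mem_Icc] at ha ⊢
        omega
      · intro k hk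
        simp only [Finset.mem_Icc] at hk ⊢
        omega
      · intro a ha
        simp only [Finset.mem_Icc] at ha
        omega
      · intro k hk
        simp only [Finset.mem_Icc] at hk
        omega
      · intro c hc
        simp only [Finset.mem_Icc] at hc
        exact hterm c hc.1 hc.2 (Or.inl hα)

noncomputable def toF {t : ℕ} (b : Fin (t+1) → ℕ) : ℕ →₀ ℕ :=
  Finsupp.onFinset (Finset.range (t+1)) (fun i => if h : i < t+1 then b ⟨i, h⟩ else 0)
    (by
      intro i hi
      rw [Finset.mem_range]
      by_contra h
      rw [dif_neg h] at hi
      exact hi rfl)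

lemma toF_apply_lt {t : ℕ} (b : Fin (t+1) → ℕ) {i : ℕ} (h : i < t+1) :
    toF b i = b ⟨i, h⟩ := dif_pos h

lemma toF_apply_ge {t : ℕ} (b : Fin (t+1) → ℕ) {i : ℕ} (h : ¬ i < t+1) :
    toF b i = 0 := dif_neg h

lemma toF_sum (m : ℕ) {t : ℕ} (b : Fin (t+1) → ℕ) :
    ∑ i ∈ (toF b).support, toF b i * m ^ i = ∑ i : Fin (t+1), b i * m ^ (i:ℕ) := by
  have hsub : (toF b).support ⊆ Finset.range (t+1) := Finsupp.support_onFinset_subset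
  rw [Finset.sum_subset hsub
    (fun x _ hx => by rw [Finsupp.notMem_support_iff.mp hx, zero_mul])]
  rw [← Fin.sum_univ_eq_sum_range (fun i => toF b i * m ^ i) (t+1)]
  refine Finset.sum_congr rfl (fun i _ => ?_)
  rw [toF_apply_lt b i.isLt, Fin.eta]

lemma cm_eq_sum (m n j : ℕ) (hm : 2 ≤ m) (hn1 : 1 ≤ n) (hnlt : n < m ^ (j+1)) :
    cm m n = ∑ t ∈ Finset.range (j+1), Nat.card (Pt m t n) := by
  have hm1 : 1 ≤ m := by omega
  set S := {f : ℕ →₀ ℕ // (∑ i ∈ f.support, f i * m ^ i = n) ∧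
    ∀ i k, f i ≠ 0 → k ≤ i → f k ≠ 0} with hS
  have hbij : Function.Bijective (fun x : Σ t : Fin (j+1), Pt m t n =>
      (⟨toF x.2.1, by
        rw [toF_sum m x.2.1]; exact x.2.2.2, by
        intro i k hi hk
        have hilt : i < (x.1:ℕ)+1 := by
          by_contra h
          rw [toF_apply_ge _ h] at hi
          exact hi rfl
        have hklt : k < (x.1:ℕ)+1 := by omega
        rw [toF_apply_lt _ hklt]
        exact x.2.2.1 _⟩ : S)) := by
    constructor
    · rintro ⟨t, b, hb1, hb2⟩ ⟨t', b', hb1', hb2'⟩ h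
      have hval : toF b = toF b' := congrArg Subtype.val h
      have happ : ∀ i, toF b i = toF b' i := fun i => by rw [hval]
      have htt : (t:ℕ) = (t':ℕ) := by
        by_contra hne
        rcases Nat.lt_or_ge (t:ℕ) (t':ℕ) with hlt | hge
        · have h1 := happ (t':ℕ)
          rw [toF_apply_ge b (by omega), toF_apply_lt b' (by omega)] at h1
          exact hb1' _ h1.symm
        · have hlt' : (t':ℕ) < (t:ℕ) := by omega
          have h1 := happ (t:ℕ)
          rw [toF_apply_lt b (by omega), toF_apply_ge b' (by omega)] at h1
          exact hb1 _ h1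
      have htt' : t = t' := Fin.ext htt
      subst htt'
      refine Sigma.ext rfl (heq_of_eq ?_)
      apply Subtype.ext
      funext i
      have h1 := happ i
      rw [toF_apply_lt b i.isLt, toF_apply_lt b' i.isLt, Fin.eta] at h1
      exact h1
    · rintro ⟨f, hsum, hgap⟩
      have hfne : f ≠ 0 := by
        intro h0
        rw [h0] at hsum
        simp at hsum
        omega
      have hsupp : f.support.Nonempty := Finsupp.support_nonempty_iff.mpr hfne
      set r := f.support.max' hsupp with hr
      have hrmem : r ∈ f.support := f.support.max'_mem hsupp
      have hfr : f r ≠ 0 := Finsupp.mem_support_iff.mp hrmem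
      have hrle : ∀ s ∈ f.support, s ≤ r := fun s hs => f.support.le_max' s hs
      have hrj : r ≤ j := by
        have h1 : m ^ r ≤ f r * m ^ r := Nat.le_mul_of_pos_left _ (Nat.pos_of_ne_zero hfr)
        have h2 : f r * m ^ r ≤ ∑ i ∈ f.support, f i * m ^ i :=
          Finset.single_le_sum (f := fun i => f i * m ^ i) (fun _ _ => Nat.zero_le _) hrmem
        have h3 : m ^ r < m ^ (j+1) := by omega
        have := (Nat.pow_lt_pow_iff_right (by omega : 1 < m)).mp h3
        omega
      have hsub : f.support ⊆ Finset.range (r+1) := by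
        intro s hs
        rw [Finset.mem_range]
        exact Nat.lt_succ_of_le (hrle s hs)
      refine ⟨⟨⟨r, by omega⟩, show Pt m r n from
        ⟨fun i => f i, fun i => hgap r i hfr (Nat.lt_succ_iff.mp i.isLt), ?_⟩⟩, ?_⟩
      · rw [Fin.sum_univ_eq_sum_range (fun i => f i * m ^ i) (r+1)]
        rw [← Finset.sum_subset hsub
          (fun x _ hx => by rw [Finsupp.notMem_support_iff.mp hx, zero_mul])]
        exact hsum
      · apply Subtype.ext
        apply Finsupp.ext
        intro i
        show toF (fun i : Fin (r+1) => f i) i = f i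
        by_cases hi : i < r + 1
        · rw [toF_apply_lt _ hi]
        · rw [toF_apply_ge _ hi]
          symm
          rw [← Finsupp.notMem_support_iff]
          intro hmem
          exact hi (Nat.lt_succ_of_le (hrle i hmem))
  haveI : ∀ (t : Fin (j+1)), Fintype (Pt m (t:ℕ) n) :=
    fun t => @Fintype.ofFinite _ (finite_Pt m _ n hm1)
  have h1 : cm m n = Nat.card (Σ t : Fin (j+1), Pt m (t:ℕ) n) :=
    (Nat.card_congr (Equiv.ofBijective _ hbij)).symm
  rw [h1, Nat.card_eq_fintype_card, Fintype.card_sigma]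
  rw [← Fin.sum_univ_eq_sum_range (fun t => Nat.card (Pt m t n)) (j+1)]
  refine Finset.sum_congr rfl (fun t _ => Nat.card_eq_fintype_card.symm)

theorem cm_enumeration (m n j : ℕ) (α : ℕ → ℕ) (hm : 2 ≤ m) (hj : 0 < α j) (hd : ∀ i, i ≤ j → α i < m)
    (hn : n = ∑ i ∈ Finset.range (j + 1), α i * m ^ i) :
    cm m n = 1 + ∑ r ∈ Finset.Icc 1 j, gsum m α r (((n / m ^ r : ℕ) : ℤ) - 1) := by
  have hn1 : 1 ≤ n := by
    have h1 : α j * m ^ j ≤ ∑ i ∈ Finset.range (j+1), α i * m ^ i :=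
      Finset.single_le_sum (f := fun i => α i * m ^ i) (fun _ _ => Nat.zero_le _)
        (Finset.mem_range.mpr (by omega))
    have h2 : 0 < α j * m ^ j := Nat.mul_pos hj (Nat.pow_pos (by omega))
    omega
  have hnlt : n < m ^ (j+1) := by
    rw [hn]
    exact sum_digits_lt m α (j+1) (fun i hi => hd i (by omega))
  rw [cm_eq_sum m n j hm hn1 hnlt]
  have hsplit : Finset.range (j+1) = insert 0 (Finset.Icc 1 j) := by
    ext x
    simp only [Finset.mem_range, Finset.mem_insert, Finset.mem_Icc]
    omega
  rw [hsplit, Finset.sum_insert (by simp)]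
  congr 1
  · exact Pt_card_zero m n hn1
  · refine Finset.sum_congr rfl (fun r hr => ?_)
    rw [Finset.mem_Icc] at hr
    exact main_D m n j α hm hd hn r hr.2 n rfl hn1
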